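/- Let p > 1 and q > p−1. There exists a positive constant C_{p,q} such that for every continuously differentiable function v : ℝ → ℝ with v(x) → 0 as |x| → ∞, with |v|^{2(q−p+1)} integrable on ℝ and |v|^{2(p−1)}(v′)² integrable on ℝ, one has sup_{x∈ℝ} |v(x)| ≤ C_{p,q} ( ∫_ℝ |v(x)|^{2(q−p+1)} dx )^{1/(2(q+1))} · ( ∫_ℝ |v(x)|^{2(p−1)} (v′(x))² dx )^{1/(2(q+1))}. -/

import Mathlib

open Real MeasureTheory Filter Set

lemma measurable_real_sign' : Measurable Real.sign := by
  have h : Real.sign = fun r : ℝ => if r < 0 then (-1:ℝ) else if 0 < r then 1 else 0 :=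
    funext fun r => rfl
  rw [h]
  exact Measurable.ite (measurableSet_lt measurable_id measurable_const) measurable_const
    (Measurable.ite (measurableSet_lt measurable_const measurable_id) measurable_const
      measurable_const)

theorem stmt_15 (p q : ℝ) (hp : 1 < p) (hq : p - 1 < q) :
    ∃ C : ℝ, 0 < C ∧ ∀ v : ℝ → ℝ, ContDiff ℝ 1 v →
      Tendsto v (Filter.cocompact ℝ) (nhds 0) →
      Integrable (fun x => |v x| ^ (2 * (q - p + 1))) →
      Integrable (fun x => |v x| ^ (2 * (p - 1)) * (deriv v x) ^ 2) →
      ∀ x : ℝ, |v x| ≤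
        C * (∫ y : ℝ, |v y| ^ (2 * (q - p + 1))) ^ (1 / (2 * (q + 1)))
          * (∫ y : ℝ, |v y| ^ (2 * (p - 1)) * (deriv v y) ^ 2) ^ (1 / (2 * (q + 1))) := by
  have hq0 : (0:ℝ) < q := lt_trans (by linarith) hq
  have hs1 : (1:ℝ) < q + 1 := by linarith
  have ha0 : (0:ℝ) < q - p + 1 := by linarith
  have hb0 : (0:ℝ) < p - 1 := by linarith
  refine ⟨q + 1, by linarith, ?_⟩
  intro v hv hv0 hA hB x
  have hvc : Continuous v := hv.continuous
  have hdc : Continuous (deriv v) := hv.continuous_deriv le_rfl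
  set A := ∫ y : ℝ, |v y| ^ (2 * (q - p + 1)) with hAdef
  set B := ∫ y : ℝ, |v y| ^ (2 * (p - 1)) * (deriv v y) ^ 2 with hBdef
  have hA0 : 0 ≤ A := integral_nonneg fun y => Real.rpow_nonneg (abs_nonneg _) _
  have hB0 : 0 ≤ B := integral_nonneg fun y =>
    mul_nonneg (Real.rpow_nonneg (abs_nonneg _) _) (sq_nonneg _)
  set F : ℝ → ℝ := fun y => |v y| ^ (q - p + 1) with hFdef
  set G : ℝ → ℝ := fun y => |v y| ^ (p - 1) * |deriv v y| with hGdef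
  have hFc : Continuous F :=
    (Real.continuous_rpow_const ha0.le).comp (continuous_abs.comp hvc)
  have hGc : Continuous G :=
    ((Real.continuous_rpow_const hb0.le).comp (continuous_abs.comp hvc)).mul
      (continuous_abs.comp hdc)
  have hFnn : ∀ y, 0 ≤ F y := fun y => Real.rpow_nonneg (abs_nonneg _) _
  have hGnn : ∀ y, 0 ≤ G y := fun y =>
    mul_nonneg (Real.rpow_nonneg (abs_nonneg _) _) (abs_nonneg _)
  -- key pointwise identity for the absolute value of the density
  have hmulpow : ∀ t : ℝ, 0 < t → t ^ (q + 1 - 2) * t = t ^ q := by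
    intro t ht
    calc t ^ (q + 1 - 2) * t = t ^ (q + 1 - 2) * t ^ (1:ℝ) := by rw [Real.rpow_one]
      _ = t ^ (q + 1 - 2 + 1) := (Real.rpow_add ht _ _).symm
      _ = t ^ q := by congr 1; ring
  have hsplit : ∀ t : ℝ, 0 < t → t ^ q = t ^ (q - p + 1) * t ^ (p - 1) := by
    intro t ht
    rw [← Real.rpow_add ht]; congr 1; ring
  have hW : ∀ t : ℝ, abs (|t| ^ (q + 1 - 2) * t) = |t| ^ (q - p + 1) * |t| ^ (p - 1) := by
    intro t
    rcases eq_or_ne t 0 with rfl | ht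
    · simp [Real.zero_rpow (ne_of_gt ha0), Real.zero_rpow (ne_of_gt hb0)]
    · have h1 : (0:ℝ) < |t| := abs_pos.2 ht
      rw [abs_mul, Real.abs_rpow_of_nonneg (abs_nonneg t), abs_abs, hmulpow _ h1, hsplit _ h1]
  have hWsign : ∀ t : ℝ, |t| ^ (q + 1 - 2) * t = Real.sign t * |t| ^ q := by
    intro t
    rcases lt_trichotomy t 0 with ht | rfl | ht
    · have h1 : (0:ℝ) < |t| := abs_pos.2 ht.ne
      rw [Real.sign_of_neg ht,
        show |t| ^ (q + 1 - 2) * t = -(|t| ^ (q + 1 - 2) * |t|) by rw [abs_of_neg ht]; ring,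
        hmulpow _ h1]
      ring
    · simp [Real.zero_rpow (ne_of_gt hq0)]
    · have h1 : (0:ℝ) < |t| := abs_pos.2 ht.ne'
      rw [Real.sign_of_pos ht, one_mul,
        show |t| ^ (q + 1 - 2) * t = |t| ^ (q + 1 - 2) * |t| by rw [abs_of_pos ht],
        hmulpow _ h1]
  -- the derivative of y ↦ |v y| ^ (q+1)
  set D : ℝ → ℝ := fun y => ((q + 1) * |v y| ^ (q + 1 - 2) * v y) * deriv v y with hDdef
  have hgd : ∀ y : ℝ, HasDerivAt (fun z => |v z| ^ (q + 1)) (D y) y := by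
    intro y
    have h1 : HasDerivAt (fun t : ℝ => |t| ^ (q + 1))
        ((q + 1) * |v y| ^ (q + 1 - 2) * v y) (v y) := hasDerivAt_abs_rpow (v y) hs1
    exact h1.comp y (hv.differentiable one_ne_zero y).hasDerivAt
  have hDabs : ∀ y : ℝ, |D y| = (q + 1) * (F y * G y) := by
    intro y
    have : D y = (q + 1) * ((|v y| ^ (q + 1 - 2) * v y) * deriv v y) := by
      rw [hDdef]; ring
    rw [this, abs_mul, abs_of_pos (by linarith : (0:ℝ) < q + 1), abs_mul, hW]
    rw [hFdef, hGdef]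
    ring
  have hDm : AEStronglyMeasurable D volume := by
    have hDeq : D = fun y => ((q + 1) * (Real.sign (v y) * |v y| ^ q)) * deriv v y := by
      funext y
      simp only [hDdef]
      rw [mul_assoc ((q:ℝ) + 1), hWsign]
    rw [hDeq]
    exact ((measurable_const.mul ((measurable_real_sign'.comp hvc.measurable).mul
      ((Real.continuous_rpow_const hq0.le).comp
        (continuous_abs.comp hvc)).measurable)).mul hdc.measurable).aestronglyMeasurable
  -- integrability of F², G², F*G, D
  have hF2 : Integrable (fun y => F y ^ 2) := by
    have : (fun y => F y ^ 2) = fun y => |v y| ^ (2 * (q - p + 1)) := by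
      funext y
      rw [hFdef, sq, ← Real.rpow_add' (abs_nonneg _) (by positivity)]
      congr 1; ring
    rw [this]; exact hA
  have hG2 : Integrable (fun y => G y ^ 2) := by
    have : (fun y => G y ^ 2) = fun y => |v y| ^ (2 * (p - 1)) * (deriv v y) ^ 2 := by
      funext y
      rw [hGdef, mul_pow, sq_abs, sq, ← Real.rpow_add' (abs_nonneg _) (by positivity)]
      congr 2; ring
    rw [this]; exact hB
  have hFG : Integrable (fun y => F y * G y) := by
    refine Integrable.mono' ((hF2.add hG2).div_const 2)
      (hFc.mul hGc).aestronglyMeasurable (ae_of_all _ fun y => ?_)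
    rw [Real.norm_eq_abs, abs_of_nonneg (mul_nonneg (hFnn y) (hGnn y))]
    simp only [Pi.add_apply]
    nlinarith [sq_nonneg (F y - G y), hFnn y, hGnn y]
  have hDi : Integrable D := by
    refine Integrable.mono' (hFG.const_mul (q + 1)) hDm (ae_of_all _ fun y => ?_)
    rw [Real.norm_eq_abs, hDabs y]
  -- Hölder
  have hmem : ∀ f : ℝ → ℝ, Continuous f → Integrable (fun y => f y ^ 2) →
      MemLp f (ENNReal.ofReal 2) volume := by
    intro f hc hi
    have h2 : ENNReal.ofReal (2:ℝ) = 2 := by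
      rw [show ((2:ℝ)) = ((2:ℕ):ℝ) by norm_num, ENNReal.ofReal_natCast]; norm_num
    rw [h2]
    exact (memLp_two_iff_integrable_sq hc.aestronglyMeasurable).2 hi
  have hconj : Real.HolderConjugate 2 2 := Real.HolderConjugate.two_two
  have hHolder : ∫ y, F y * G y ≤ A ^ (1/2 : ℝ) * B ^ (1/2 : ℝ) := by
    have h := integral_mul_le_Lp_mul_Lq_of_nonneg hconj (ae_of_all _ hFnn) (ae_of_all _ hGnn)
      (hmem F hFc hF2) (hmem G hGc hG2)
    have hA2 : ∫ y, F y ^ (2:ℝ) = A := by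
      rw [hAdef]
      refine integral_congr_ae (ae_of_all _ fun y => ?_)
      show (|v y| ^ (q - p + 1) : ℝ) ^ (2:ℝ) = |v y| ^ (2 * (q - p + 1))
      rw [← Real.rpow_mul (abs_nonneg _)]
      congr 1; ring
    have hB2 : ∫ y, G y ^ (2:ℝ) = B := by
      rw [hBdef]
      refine integral_congr_ae (ae_of_all _ fun y => ?_)
      show ((|v y| ^ (p - 1) * |deriv v y| : ℝ)) ^ (2:ℝ) = |v y| ^ (2 * (p - 1)) * (deriv v y) ^ 2
      have h9 : |deriv v y| ^ (2:ℝ) = (deriv v y) ^ 2 := by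
        rw [show (2:ℝ) = ((2:ℕ):ℝ) by norm_num, Real.rpow_natCast, sq_abs]
      rw [Real.mul_rpow (Real.rpow_nonneg (abs_nonneg _) _) (abs_nonneg _), h9,
        ← Real.rpow_mul (abs_nonneg _), mul_comm (p - 1) (2:ℝ)]
    rw [hA2, hB2] at h
    exact h
  set I : ℝ := ∫ y, (q + 1) * (F y * G y) with hIdef
  have hIle : I ≤ (q + 1) * (A ^ (1/2 : ℝ) * B ^ (1/2 : ℝ)) := by
    rw [hIdef, integral_const_mul]
    exact mul_le_mul_of_nonneg_left hHolder (by linarith)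
  -- FTC bound
  have hkey : ∀ y, y ≤ x → |v x| ^ (q + 1) ≤ |v y| ^ (q + 1) + I := by
    intro y hyx
    have hftc : ∫ t in y..x, D t = |v x| ^ (q + 1) - |v y| ^ (q + 1) :=
      intervalIntegral.integral_eq_sub_of_hasDerivAt (fun t _ => hgd t)
        hDi.intervalIntegrable
    have h1 : |∫ t in y..x, D t| ≤ ∫ t in y..x, |D t| :=
      intervalIntegral.abs_integral_le_integral_abs hyx
    have h2 : ∫ t in y..x, |D t| ≤ I := by
      rw [intervalIntegral.integral_of_le hyx]
      have h3 : ∫ t in Ioc y x, |D t| ≤ ∫ t, |D t| :=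
        setIntegral_le_integral hDi.abs (ae_of_all _ fun t => abs_nonneg _)
      have h4 : ∫ t, |D t| = I := by
        rw [hIdef]
        exact integral_congr_ae (ae_of_all _ fun t => hDabs t)
      linarith
    have h5 : |v x| ^ (q + 1) - |v y| ^ (q + 1) ≤ |∫ t in y..x, D t| := by
      rw [hftc] at h1 ⊢
      exact le_abs_self _
    linarith
  have hlim : Tendsto (fun y => |v y| ^ (q + 1) + I) atBot (nhds (0 + I)) := by
    have h0 : Tendsto v atBot (nhds 0) :=
      hv0.mono_left (by rw [cocompact_eq_atBot_atTop]; exact le_sup_left)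
    have hc : Continuous (fun t : ℝ => |t| ^ (q + 1)) :=
      (Real.continuous_rpow_const (by linarith)).comp continuous_abs
    have h1 := (hc.tendsto 0).comp h0
    have h2 : |(0:ℝ)| ^ (q + 1) = 0 := by
      simp [Real.zero_rpow (by linarith : q + 1 ≠ 0)]
    rw [h2] at h1
    exact h1.add tendsto_const_nhds
  have hmain : |v x| ^ (q + 1) ≤ I := by
    have := ge_of_tendsto hlim (eventually_atBot.2 ⟨x, fun y hy => hkey y hy⟩)
    linarith
  -- conclude
  have hR : |v x| ^ (q + 1) ≤ (q + 1) * (A ^ (1/2 : ℝ) * B ^ (1/2 : ℝ)) := le_trans hmain hIle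
  have hvx : |v x| = (|v x| ^ (q + 1)) ^ ((q + 1)⁻¹) :=
    (Real.rpow_rpow_inv (abs_nonneg _) (by linarith : q + (1:ℝ) ≠ 0)).symm
  rw [hvx]
  have hstep : (|v x| ^ (q + 1)) ^ ((q + 1)⁻¹) ≤
      ((q + 1) * (A ^ (1/2:ℝ) * B ^ (1/2:ℝ))) ^ ((q + 1)⁻¹) :=
    Real.rpow_le_rpow (Real.rpow_nonneg (abs_nonneg _) _) hR (by positivity)
  refine le_trans hstep ?_
  have hAB : (0:ℝ) ≤ A ^ (1/2:ℝ) * B ^ (1/2:ℝ) :=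
    mul_nonneg (Real.rpow_nonneg hA0 _) (Real.rpow_nonneg hB0 _)
  rw [Real.mul_rpow (by linarith : (0:ℝ) ≤ q + 1) hAB,
    Real.mul_rpow (Real.rpow_nonneg hA0 _) (Real.rpow_nonneg hB0 _),
    ← Real.rpow_mul hA0, ← Real.rpow_mul hB0]
  have he : (1/2 : ℝ) * (q + 1)⁻¹ = 1 / (2 * (q + 1)) := by
    field_simp
  rw [he, ← mul_assoc]
  have h1 : (q + 1 : ℝ) ^ ((q + 1)⁻¹) ≤ q + 1 := by
    have h2 := Real.rpow_le_rpow_of_exponent_le (by linarith : (1:ℝ) ≤ q + 1)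
      (inv_le_one_of_one_le₀ (by linarith : (1:ℝ) ≤ q + 1))
    simpa using h2
  exact mul_le_mul_of_nonneg_right
    (mul_le_mul_of_nonneg_right h1 (Real.rpow_nonneg hA0 _)) (Real.rpow_nonneg hB0 _)
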